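/- Let r be a positive integer, and let u = (x, 0) and v = (x', y') be vertices of the hexagonal grid with y' > 0 and x < x'. Then neither (x−r, 0) nor (x−r+1, 0) lies in B_r(v), while both lie in B_r(u). -/

import Mathlib

/-- The hexagonal grid in its brick wall representation: vertex set ℤ×ℤ,
with (x,y) adjacent to (x±1,y) always, and to (x,y+1) if x+y is even
(equivalently, to (x,y-1) if x+y is odd). -/
def hexGraph : SimpleGraph (ℤ × ℤ) where
  Adj u v := (u.2 = v.2 ∧ (u.1 = v.1 + 1 ∨ v.1 = u.1 + 1)) ∨
    (u.1 = v.1 ∧ ((v.2 = u.2 + 1 ∧ Even (u.1 + u.2)) ∨ (u.2 = v.2 + 1 ∧ Even (v.1 + v.2))))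
  symm := by
    constructor
    rintro u v (⟨h1, h2 | h2⟩ | ⟨h1, ⟨h2, h3⟩ | ⟨h2, h3⟩⟩)
    · exact Or.inl ⟨h1.symm, Or.inr h2⟩
    · exact Or.inl ⟨h1.symm, Or.inl h2⟩
    · exact Or.inr ⟨h1.symm, Or.inr ⟨h2, h3⟩⟩
    · exact Or.inr ⟨h1.symm, Or.inl ⟨h2, h3⟩⟩
  loopless := by constructor; rintro ⟨x, y⟩ (⟨_, h | h⟩ | ⟨_, ⟨h, _⟩ | ⟨h, _⟩⟩) <;> omega

/-- The graph distance from a vertex to the horizontal line L_k = {(x,k) : x ∈ ℤ}. -/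
noncomputable def hexLineDist (u : ℤ × ℤ) (k : ℤ) : ℕ :=
  sInf {n : ℕ | ∃ x : ℤ, hexGraph.dist u (x, k) = n}

lemma hex_adj_right (a y : ℤ) : hexGraph.Adj (a, y) (a + 1, y) :=
  Or.inl ⟨rfl, Or.inr rfl⟩

lemma hex_walk_right (y : ℤ) : ∀ (n : ℕ) (a : ℤ),
    ∃ w : hexGraph.Walk (a, y) (a + (n : ℤ), y), w.length = n := by
  intro n
  induction n with
  | zero => intro a; exact ⟨SimpleGraph.Walk.nil.copy rfl (by norm_num), by simp⟩
  | succ n ih =>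
    intro a
    obtain ⟨w, hw⟩ := ih (a + 1)
    refine ⟨((SimpleGraph.Walk.cons (hex_adj_right a y) w).copy rfl (by push_cast; ring_nf)), ?_⟩
    simp [hw]

lemma hex_l1_le_walk : ∀ {u v : ℤ × ℤ} (w : hexGraph.Walk u v),
    (u.1 - v.1).natAbs + (u.2 - v.2).natAbs ≤ w.length := by
  intro u v w
  induction w with
  | nil => simp
  | cons h p ih =>
    rename_i a b c
    rcases id h with ⟨h1, h2 | h2⟩ | ⟨h1, ⟨h2, _⟩ | ⟨h2, _⟩⟩ <;>
      simp only [SimpleGraph.Walk.length_cons] <;> omega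

lemma hex_reach_right (a : ℤ) (n : ℕ) (y : ℤ) :
    hexGraph.Reachable (a, y) (a + (n : ℤ), y) := by
  obtain ⟨w, _⟩ := hex_walk_right y n a
  exact ⟨w⟩

lemma hex_reach_horiz (a b y : ℤ) : hexGraph.Reachable (a, y) (b, y) := by
  rcases le_or_gt a b with h | h
  · have := hex_reach_right a (b - a).toNat y
    rwa [Int.toNat_of_nonneg (by omega), show a + (b - a) = b by ring] at this
  · have := hex_reach_right b (a - b).toNat y
    rw [Int.toNat_of_nonneg (by omega), show b + (a - b) = a by ring] at this
    exact this.symm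

lemma hex_reach_line : ∀ (n : ℕ) (a b : ℤ), hexGraph.Reachable (a, 0) (b, (n : ℤ)) := by
  intro n
  induction n with
  | zero => intro a b; exact hex_reach_horiz a b 0
  | succ n ih =>
    intro a b
    have h1 := ih a (-(n : ℤ))
    have h2 : hexGraph.Adj (-(n : ℤ), (n : ℤ)) (-(n : ℤ), (n : ℤ) + 1) :=
      Or.inr ⟨rfl, Or.inl ⟨rfl, by simp⟩⟩
    have h3 := hex_reach_horiz (-(n : ℤ)) b ((n : ℤ) + 1)
    have := (h1.trans h2.reachable).trans h3
    rwa [show ((n : ℤ) + 1) = ((n + 1 : ℕ) : ℤ) by push_cast; ring] at this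

/-- for u = (x,0) and v = (x',y') with y' > 0 and x < x', the vertices
(x−r,0) and (x−r+1,0) lie in B_r(u) but not in B_r(v). -/
theorem hex_left_witnesses (r : ℕ) (hr : 0 < r) (x x' y' : ℤ)
    (hy : 0 < y') (hx : x < x') :
    hexGraph.dist (x - r, 0) (x, 0) ≤ r ∧
    hexGraph.dist (x - r + 1, 0) (x, 0) ≤ r ∧
    ¬ hexGraph.dist (x - r, 0) (x', y') ≤ r ∧
    ¬ hexGraph.dist (x - r + 1, 0) (x', y') ≤ r := by
  have up : ∀ a : ℤ, ∀ n : ℕ, hexGraph.dist (a, (0:ℤ)) (a + (n:ℤ), 0) ≤ n := by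
    intro a n
    obtain ⟨w, hw⟩ := hex_walk_right 0 n a
    have := SimpleGraph.dist_le w; omega
  have low : ∀ a : ℤ, (a - x').natAbs + y'.natAbs ≤ hexGraph.dist (a, (0:ℤ)) (x', y') := by
    intro a
    have hre : hexGraph.Reachable (a, (0:ℤ)) (x', y') := by
      have := hex_reach_line y'.toNat a x'
      rwa [Int.toNat_of_nonneg (by omega)] at this
    obtain ⟨w, hw⟩ := hre.exists_walk_length_eq_dist
    have := hex_l1_le_walk w
    simp only [hw] at this
    omega
  refine ⟨?_, ?_, ?_, ?_⟩
  · have := up (x - r) r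
    rwa [show x - (r:ℤ) + (r:ℤ) = x by ring] at this
  · have := up (x - r + 1) (r - 1)
    have h2 : x - (r:ℤ) + 1 + ((r - 1 : ℕ) : ℤ) = x := by push_cast; omega
    rw [h2] at this
    omega
  · have := low (x - r); omega
  · have := low (x - r + 1); omega
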